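/- For each linear extension of a finite poset P with p elements, given by an enumeration x_{σ(1)}, ..., x_{σ(p)}, the region R_σ = {f ∈ O(P) : f(x_{σ(1)}) ≤ f(x_{σ(2)}) ≤ ⋯ ≤ f(x_{σ(p)})} is a p-dimensional simplex whose vertices are the p+1 indicator-type functions f_k defined by f_k(x_{σ(i)}) = 0 for i ≤ k and f_k(x_{σ(i)}) = 1 for i > k, for k = 0,1,...,p. -/
import Mathlib

open Finset

/-- For a linear extension `σ` of a finite poset `P` with `p` elements, the region
`R_σ` is the convex hull of the `p+1` step functions `f_k` (i.e. a simplex with these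
vertices), and these `p+1` points are affinely independent (so `R_σ` is a
`p`-dimensional simplex). -/
theorem Rsigma_simplex (P : Type*) [Fintype P] [PartialOrder P]
    (σ : Fin (Fintype.card P) ≃ P) (hσ : ∀ i j, σ i ≤ σ j → i ≤ j) :
    ({f : P → ℝ | (∀ x, f x ∈ Set.Icc (0:ℝ) 1) ∧ (∀ x y, x ≤ y → f x ≤ f y) ∧
        ∀ i j, i ≤ j → f (σ i) ≤ f (σ j)}
      = convexHull ℝ (Set.range fun k : Fin (Fintype.card P + 1) =>
          fun x : P => if ((σ.symm x : ℕ) < (k : ℕ)) then (0:ℝ) else 1)) ∧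
    AffineIndependent ℝ (fun k : Fin (Fintype.card P + 1) =>
      fun x : P => if ((σ.symm x : ℕ) < (k : ℕ)) then (0:ℝ) else 1) := by
  classical
  set v : Fin (Fintype.card P + 1) → P → ℝ :=
    (fun k => fun x : P => if ((σ.symm x : ℕ) < (k : ℕ)) then (0:ℝ) else 1)
    with hv
  set S : Set (P → ℝ) := {f : P → ℝ | (∀ x, f x ∈ Set.Icc (0:ℝ) 1) ∧ (∀ x y, x ≤ y → f x ≤ f y) ∧
        ∀ i j, i ≤ j → f (σ i) ≤ f (σ j)} with hS
  have hconv : Convex ℝ S := by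
    intro f hf g hg a b ha hb hab
    obtain ⟨hf1, hf2, hf3⟩ := hf
    obtain ⟨hg1, hg2, hg3⟩ := hg
    refine ⟨fun x => ?_, fun x y hxy => ?_, fun i j hij => ?_⟩
    · have h1 := hf1 x; have h2 := hg1 x
      simp only [Set.mem_Icc] at h1 h2 ⊢
      simp only [Pi.add_apply, Pi.smul_apply, smul_eq_mul]
      constructor
      · exact add_nonneg (mul_nonneg ha h1.1) (mul_nonneg hb h2.1)
      · calc a * f x + b * g x ≤ a * 1 + b * 1 := by
              apply add_le_add (mul_le_mul_of_nonneg_left h1.2 ha)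
                (mul_le_mul_of_nonneg_left h2.2 hb)
            _ = 1 := by linarith
    · simp only [Pi.add_apply, Pi.smul_apply, smul_eq_mul]
      exact add_le_add (mul_le_mul_of_nonneg_left (hf2 x y hxy) ha)
        (mul_le_mul_of_nonneg_left (hg2 x y hxy) hb)
    · simp only [Pi.add_apply, Pi.smul_apply, smul_eq_mul]
      exact add_le_add (mul_le_mul_of_nonneg_left (hf3 i j hij) ha)
        (mul_le_mul_of_nonneg_left (hg3 i j hij) hb)
  have hvmem : ∀ k, v k ∈ S := by
    intro k
    refine ⟨fun x => ?_, fun x y hxy => ?_, fun i j hij => ?_⟩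
    · simp only [hv]; split_ifs <;> norm_num
    · have hle : ((σ.symm x : ℕ)) ≤ (σ.symm y : ℕ) := by
        exact_mod_cast hσ (σ.symm x) (σ.symm y) (by simpa using hxy)
      simp only [hv]
      split_ifs with h1 h2
      · exact le_refl _
      · norm_num
      · omega
      · exact le_refl _
    · have hle : ((σ.symm (σ i) : ℕ)) ≤ (σ.symm (σ j) : ℕ) := by
        simpa using hij
      simp only [hv]
      split_ifs with h1 h2
      · exact le_refl _
      · norm_num
      · omega
      · exact le_refl _
  constructor
  · apply Set.Subset.antisymm
    · -- S ⊆ hull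
      intro f hf
      obtain ⟨hf1, hf2, hf3⟩ := hf
      set G : ℕ → ℝ := fun n => if n = 0 then 0 else
          if h : n - 1 < Fintype.card P then f (σ ⟨n-1, h⟩) else 1 with hG
      have hG0 : ∀ n, 0 ≤ G n := by
        intro n
        simp only [hG]
        split_ifs with h1 h2
        · exact le_refl 0
        · exact (hf1 _).1
        · norm_num
      have hG1 : ∀ n, G n ≤ 1 := by
        intro n
        simp only [hG]
        split_ifs with h1 h2
        · norm_num
        · exact (hf1 _).2
        · exact le_refl 1
      have hGmono : ∀ n, G n ≤ G (n+1) := by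
        intro n
        rcases Nat.eq_zero_or_pos n with h0 | h0
        · subst h0
          simpa [hG] using hG0 1
        · by_cases hn : n < Fintype.card P
          · have hn1 : n - 1 < Fintype.card P := by omega
            have e1 : G n = f (σ ⟨n-1, hn1⟩) := by
              simp only [hG]; rw [if_neg (by omega), dif_pos hn1]
            have e2 : G (n+1) = f (σ ⟨n, hn⟩) := by
              simp only [hG, Nat.add_sub_cancel]; rw [if_neg (by omega), dif_pos hn]
            rw [e1, e2]
            exact hf3 _ _ (by rw [Fin.mk_le_mk]; omega)
          · have e2 : G (n+1) = 1 := by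
              simp only [hG]; rw [if_neg (by omega), dif_neg (by omega)]
            rw [e2]; exact hG1 n
      set w : Fin (Fintype.card P + 1) → ℝ := fun k => G ((k : ℕ) + 1) - G (k : ℕ) with hw
      have hw0 : ∀ k, 0 ≤ w k := fun k => sub_nonneg.2 (hGmono k)
      have hwsum : ∑ k, w k = 1 := by
        rw [hw]
        rw [Fin.sum_univ_eq_sum_range (fun n => G (n+1) - G n)]
        rw [Finset.sum_range_sub G]
        have : G (Fintype.card P + 1) = 1 := by
          simp only [hG]; rw [if_neg (by omega), dif_neg (by omega)]
        simp [this, hG]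
      have hfeq : f = ∑ k, w k • v k := by
        funext x
        have hix : ((σ.symm x : ℕ)) < Fintype.card P := (σ.symm x).isLt
        rw [Finset.sum_apply]
        have : ∀ k : Fin (Fintype.card P + 1),
            (w k • v k) x = if ((σ.symm x : ℕ)) < (k : ℕ) then 0 else (G ((k:ℕ)+1) - G (k:ℕ)) := by
          intro k
          simp only [Pi.smul_apply, hv, hw, smul_eq_mul, mul_ite, mul_zero, mul_one]
        rw [Finset.sum_congr rfl (fun k _ => this k)]
        rw [Fin.sum_univ_eq_sum_range
          (fun n => if ((σ.symm x : ℕ)) < n then 0 else (G (n+1) - G n))]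
        rw [← Finset.sum_subset (Finset.range_subset_range.2 (by omega :
            (σ.symm x : ℕ) + 1 ≤ Fintype.card P + 1))
          (fun n _ hn => by rw [if_pos]; simp only [Finset.mem_range] at hn ⊢; omega)]
        have : ∀ n ∈ Finset.range ((σ.symm x : ℕ) + 1),
            (if ((σ.symm x : ℕ)) < n then (0:ℝ) else (G (n+1) - G n)) = G (n+1) - G n := by
          intro n hn
          rw [if_neg]; simp only [Finset.mem_range] at hn; omega
        rw [Finset.sum_congr rfl this, Finset.sum_range_sub G]
        have : G ((σ.symm x : ℕ) + 1) = f x := by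
          simp only [hG, Nat.add_sub_cancel]
          rw [if_neg (by omega), dif_pos hix]
          congr
          simp [Fin.eta]
        rw [this]
        simp [hG]
      rw [hfeq]
      exact Convex.sum_mem (convex_convexHull ℝ _) (fun k _ => hw0 k) hwsum
        (fun k _ => subset_convexHull ℝ _ ⟨k, rfl⟩)
    · -- hull ⊆ S
      exact convexHull_min (by rintro _ ⟨k, rfl⟩; exact hvmem k) hconv
  · -- affine independence
    rw [affineIndependent_iff]
    intro s c hc0 hcsum k0 hk0
    have hT0 : ∀ m, m ≤ Fintype.card P + 1 →
        ∑ k ∈ s.filter (fun k : Fin (Fintype.card P + 1) => (k : ℕ) < m), c k = 0 := by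
      intro m hm
      rcases Nat.eq_zero_or_pos m with h0 | h0
      · subst h0
        simp
      · rcases Nat.lt_or_ge (m - 1) (Fintype.card P) with hj | hj
        · -- evaluate hcsum at σ ⟨m-1, hj⟩
          have := congrFun hcsum (σ ⟨m - 1, hj⟩)
          rw [Finset.sum_apply] at this
          simp only [Pi.smul_apply, hv, smul_eq_mul, Equiv.symm_apply_apply, mul_ite, mul_zero,
            mul_one, Pi.zero_apply] at this
          rw [Finset.sum_ite, Finset.sum_const, smul_zero, zero_add] at this
          rw [← this]
          apply Finset.sum_congr _ (fun _ _ => rfl)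
          apply Finset.filter_congr
          intro k _
          simp only [not_lt, eq_iff_iff]
          omega
        · -- m = card P + 1, filter is everything
          rw [Finset.filter_true_of_mem (fun k _ => by omega)]
          exact hc0
    have h1 : ∑ k ∈ s.filter (fun k : Fin (Fintype.card P + 1) => (k : ℕ) < (k0 : ℕ) + 1), c k
        = (∑ k ∈ s.filter (fun k : Fin (Fintype.card P + 1) => (k : ℕ) < (k0 : ℕ)), c k)
          + c k0 := by
      have hins : s.filter (fun k : Fin (Fintype.card P + 1) => (k : ℕ) < (k0 : ℕ) + 1)
          = insert k0 (s.filter (fun k : Fin (Fintype.card P + 1) => (k : ℕ) < (k0 : ℕ))) := by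
        ext k
        simp only [Finset.mem_filter, Finset.mem_insert]
        constructor
        · rintro ⟨hks, hklt⟩
          rcases Nat.lt_or_ge (k : ℕ) (k0 : ℕ) with h | h
          · exact Or.inr ⟨hks, h⟩
          · exact Or.inl (Fin.ext (by omega))
        · rintro (rfl | ⟨hks, hklt⟩)
          · exact ⟨hk0, by omega⟩
          · exact ⟨hks, by omega⟩
      rw [hins, Finset.sum_insert (by simp)]
      ring
    have h2 := hT0 ((k0 : ℕ) + 1) (by omega)
    have h3 := hT0 (k0 : ℕ) (by omega)
    rw [h2, h3] at h1
    linarith
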